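/- (Proposition 1) For a finely layered medium of n isotropic layers satisfying the strict stability conditions, the Backus conditions M = L, S = M·T and T = M·R hold if and only if c1212 = c2323, c1111 = c3333 and c1133 = c1111 − 2·c1212. -/

import Mathlib

open Filter Real

noncomputable section

/-- Arithmetic average of `n` values (equal layer thickness). -/
def avgN (n : ℕ) (f : Fin n → ℝ) : ℝ := (∑ i, f i) / n

/-- Backus-average coefficient c1111 of `n` isotropic layers. -/
def c1111N (n : ℕ) (lam mu : Fin n → ℝ) : ℝ :=
  (avgN n (fun i => lam i / (lam i + 2 * mu i))) ^ 2
      * (avgN n (fun i => 1 / (lam i + 2 * mu i)))⁻¹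
    + avgN n (fun i => 4 * (lam i + mu i) * mu i / (lam i + 2 * mu i))

/-- Backus-average coefficient c1122 of `n` isotropic layers. -/
def c1122N (n : ℕ) (lam mu : Fin n → ℝ) : ℝ :=
  (avgN n (fun i => lam i / (lam i + 2 * mu i))) ^ 2
      * (avgN n (fun i => 1 / (lam i + 2 * mu i)))⁻¹
    + avgN n (fun i => 2 * lam i * mu i / (lam i + 2 * mu i))

/-- Backus-average coefficient c1133 of `n` isotropic layers. -/
def c1133N (n : ℕ) (lam mu : Fin n → ℝ) : ℝ :=
  avgN n (fun i => lam i / (lam i + 2 * mu i))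
    * (avgN n (fun i => 1 / (lam i + 2 * mu i)))⁻¹

/-- Backus-average coefficient c3333 of `n` isotropic layers. -/
def c3333N (n : ℕ) (lam mu : Fin n → ℝ) : ℝ :=
  (avgN n (fun i => 1 / (lam i + 2 * mu i)))⁻¹

/-- Backus-average coefficient c2323 of `n` isotropic layers. -/
def c2323N (n : ℕ) (mu : Fin n → ℝ) : ℝ := (avgN n (fun i => 1 / mu i))⁻¹

/-- Backus-average coefficient c1212 of `n` isotropic layers. -/
def c1212N (n : ℕ) (mu : Fin n → ℝ) : ℝ := avgN n mu

end


lemma avgN_congr {n : ℕ} {f g : Fin n → ℝ} (h : ∀ i, f i = g i) : avgN n f = avgN n g := by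
  simp only [avgN]
  congr 1
  exact Finset.sum_congr rfl (fun i _ => h i)

lemma avgN_comb (n : ℕ) (a b : ℝ) (f g : Fin n → ℝ) :
    avgN n (fun i => a * f i + b * g i) = a * avgN n f + b * avgN n g := by
  simp only [avgN]
  rw [Finset.sum_add_distrib, ← Finset.mul_sum, ← Finset.mul_sum, add_div,
    mul_div_assoc, mul_div_assoc]

lemma avgN_const (n : ℕ) (hn : 1 ≤ n) (c : ℝ) : avgN n (fun _ => c) = c := by
  have hn0 : (n : ℝ) ≠ 0 := Nat.cast_ne_zero.mpr (by omega)
  simp only [avgN, Finset.sum_const, Finset.card_univ, Fintype.card_fin, nsmul_eq_mul]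
  field_simp

lemma avgN_pos (n : ℕ) (hn : 1 ≤ n) (f : Fin n → ℝ) (hf : ∀ i, 0 < f i) :
    0 < avgN n f := by
  have hn' : (0 : ℝ) < n := by exact_mod_cast hn
  apply div_pos _ hn'
  exact Finset.sum_pos (fun i _ => hf i) (Finset.univ_nonempty_iff.mpr ⟨⟨0, by omega⟩⟩)

/-- Proposition 1: For n isotropic layers satisfying the strict
stability conditions, the Backus conditions M = L, S = M·T and T = M·R hold
iff c1212 = c2323, c1111 = c3333 and c1133 = c1111 − 2·c1212. -/
theorem stmt6 (n : ℕ) (hn : 1 ≤ n) (lam mu : Fin n → ℝ)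
    (hmu : ∀ i, 0 < mu i) (hlm : ∀ i, 0 < lam i + 2 * mu i) :
    (c1212N n mu = c2323N n mu ∧
      avgN n (fun i => (mu i / (lam i + 2 * mu i)) * mu i)
        = c1212N n mu * avgN n (fun i => mu i / (lam i + 2 * mu i)) ∧
      avgN n (fun i => mu i / (lam i + 2 * mu i))
        = c1212N n mu * avgN n (fun i => (mu i / (lam i + 2 * mu i)) * (1 / mu i)))
    ↔
    (c1212N n mu = c2323N n mu ∧
      c1111N n lam mu = c3333N n lam mu ∧
      c1133N n lam mu = c1111N n lam mu - 2 * c1212N n mu) := by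
  have hd : ∀ i, lam i + 2 * mu i ≠ 0 := fun i => (hlm i).ne'
  have hm : ∀ i, mu i ≠ 0 := fun i => (hmu i).ne'
  set R := avgN n (fun i => 1 / (lam i + 2 * mu i)) with hRdef
  set T := avgN n (fun i => mu i / (lam i + 2 * mu i)) with hTdef
  set S := avgN n (fun i => (mu i / (lam i + 2 * mu i)) * mu i) with hSdef
  set M := avgN n mu with hMdef
  have hRpos : 0 < R := avgN_pos n hn _ (fun i => by
    have := hlm i; positivity)
  have hRne : R ≠ 0 := hRpos.ne'
  have hR' : avgN n (fun i => (mu i / (lam i + 2 * mu i)) * (1 / mu i)) = R := by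
    rw [hRdef]
    exact avgN_congr (fun i => by field_simp [hd i, hm i]; try ring)
  have hA : avgN n (fun i => lam i / (lam i + 2 * mu i)) = 1 - 2 * T := by
    have h1 := avgN_comb n 1 (-2) (fun _ : Fin n => (1 : ℝ))
      (fun i => mu i / (lam i + 2 * mu i))
    have h2 : avgN n (fun i => lam i / (lam i + 2 * mu i))
        = avgN n (fun i => 1 * (1 : ℝ) + (-2) * (mu i / (lam i + 2 * mu i))) :=
      avgN_congr (fun i => by field_simp [hd i]; try ring)
    rw [h2, h1, avgN_const n hn]
    rw [hTdef]
    ring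
  have h4 : avgN n (fun i => 4 * (lam i + mu i) * mu i / (lam i + 2 * mu i))
      = 4 * M - 4 * S := by
    have h1 := avgN_comb n 4 (-4) mu (fun i => (mu i / (lam i + 2 * mu i)) * mu i)
    have h2 : avgN n (fun i => 4 * (lam i + mu i) * mu i / (lam i + 2 * mu i))
        = avgN n (fun i => 4 * mu i + (-4) * ((mu i / (lam i + 2 * mu i)) * mu i)) :=
      avgN_congr (fun i => by
        rw [div_eq_iff (hd i), add_mul, mul_assoc (-4 : ℝ), div_mul_eq_mul_div,
          div_mul_cancel₀ _ (hd i)]; ring)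
    rw [h2, h1, hMdef, hSdef]
    ring
  simp only [c1111N, c1133N, c3333N, c1212N, hA, h4, hR', ← hRdef, ← hMdef]
  constructor
  · rintro ⟨h1, h2, h3⟩
    refine ⟨h1, ?_, ?_⟩
    · rw [h2, h3]; field_simp; ring
    · rw [h2, h3]; field_simp; ring
  · rintro ⟨h1, h2, h3⟩
    refine ⟨h1, ?_, ?_⟩
    all_goals {
      have q1 : (1 - 2 * T) ^ 2 + (4 * M - 4 * S) * R = 1 := by
        have := congrArg (· * R) h2
        simp only [add_mul, sub_mul, mul_assoc, inv_mul_cancel₀ hRne] at this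
        linear_combination this
      have q2 : (1 - 2 * T) = (1 - 2 * T) ^ 2 + (2 * M - 4 * S) * R := by
        have := congrArg (· * R) h3
        simp only [add_mul, sub_mul, mul_assoc, inv_mul_cancel₀ hRne] at this
        linear_combination this
      have hTR : T = M * R := by
        linear_combination (-(1:ℝ)/2) * q1 + (-(1:ℝ)/2) * q2
      have hSR : S * R = M * T * R := by
        linear_combination (-(1:ℝ)/4) * q1 + (T - 1) * hTR
      first
        | exact mul_right_cancel₀ hRne hSR
        | exact hTR }
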